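/- Let c ≤ d be integers, let α : {0,1} → {0,1}, and let F = (F_j)_{j∈ℤ} be a finitely supported sequence of contractive matrices supported in [c,d]. Write [[A,B],[C,D]] := 𝓕_α(F) and [[E_j,F_j],[G_j,H_j]] := Y_α(F_j). Then the blocks A, B, C, D are matrix Laurent polynomials in z whose Fourier coefficients vanish outside [c−d, 0], [c, d], [−d, −c], [0, d−c] respectively; moreover Â(0) = ∏_j^{→} E_j and D̂(0) = ∏_j^{→} H_j (products over the support in increasing order of j), so that Â(0) ∈ 𝓖_{α(0)} and D̂(0) ∈ 𝓖_{α(1)}. If in addition c = 0, then B̂(0)·D̂(0)^{−1} = F₀·H₀^{−1} and Ĉ(0)·Â(0)^{−1} = G₀·E₀^{−1}. -/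

import Mathlib

open MeasureTheory Matrix Filter
open scoped Real ENNReal Topology ComplexOrder

noncomputable section

namespace NLFT

instance : MeasurableSpace Circle := borel Circle
instance : BorelSpace Circle := ⟨rfl⟩

/-- The Haar probability measure on the unit circle `𝕋`. -/
def μ : Measure Circle :=
  Measure.map AddCircle.toCircle (@AddCircle.haarAddCircle (2 * Real.pi) ⟨Real.two_pi_pos⟩)

/-- `n × n` complex matrices. -/
abbrev Mat (n : ℕ) := Matrix (Fin n) (Fin n) ℂ

/-- `2n × 2n` complex matrices, written in `2 × 2` block form. -/
abbrev Mat2 (n : ℕ) := Matrix (Fin n ⊕ Fin n) (Fin n ⊕ Fin n) ℂ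

/-- The Hilbert–Schmidt norm `‖·‖₂` of a matrix. -/
def hsNorm {ι κ : Type*} [Fintype ι] [Fintype κ] (M : Matrix ι κ ℂ) : ℝ :=
  Real.sqrt (∑ i, ∑ j, ‖M i j‖ ^ 2)

/-- The operator norm `‖·‖_∞` (largest singular value) of a matrix. -/
def opNorm {ι : Type*} [Fintype ι] [DecidableEq ι] (M : Matrix ι ι ℂ) : ℝ :=
  ‖toEuclideanCLM (𝕜 := ℂ) M‖

/-- A matrix is contractive if its operator norm is `< 1`. -/
def Contractive {ι : Type*} [Fintype ι] [DecidableEq ι] (M : Matrix ι ι ℂ) : Prop :=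
  opNorm M < 1

/-- Membership in `𝓖₀` (upper triangular, `a = 0`) or `𝓖₁` (lower triangular, `a = 1`):
triangular with strictly positive (real) diagonal entries. -/
def Triangular {n : ℕ} (a : Fin 2) (M : Mat n) : Prop :=
  (∀ i j : Fin n, (if a = 0 then j < i else i < j) → M i j = 0) ∧
  ∀ i, 0 < (M i i).re ∧ (M i i).im = 0

/-- A square matrix is unitary. -/
def IsUnitary {ι : Type*} [Fintype ι] [DecidableEq ι] (M : Matrix ι ι ℂ) : Prop :=
  Mᴴ * M = 1

/-- A square matrix is special unitary. -/
def IsSU {ι : Type*} [Fintype ι] [DecidableEq ι] (M : Matrix ι ι ℂ) : Prop :=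
  IsUnitary M ∧ M.det = 1

/-- Membership in `SU_α(2n)`. -/
def IsSUa {n : ℕ} (α : Fin 2 → Fin 2) (M : Mat2 n) : Prop :=
  IsSU M ∧ Triangular (α 0) M.toBlocks₁₁ ∧ Triangular (α 1) M.toBlocks₂₂

/-- The `k`-th Fourier coefficient `X̂(k) = ∫_𝕋 X(z) z^{-k}` of a matrix-valued function,
computed entrywise. -/
def mFourierCoeff {ι κ : Type*} [Fintype ι] [Fintype κ] (X : Circle → Matrix ι κ ℂ) (k : ℤ) :
    Matrix ι κ ℂ :=
  Matrix.of fun i j => ∫ z : Circle, (z : ℂ) ^ (-k) * X z i j ∂μ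

/-- All entries square integrable on the circle. -/
def MemL2 {ι κ : Type*} [Fintype ι] [Fintype κ] (X : Circle → Matrix ι κ ℂ) : Prop :=
  ∀ i j, MemLp (fun z => X z i j) 2 μ

/-- Membership in the matrix Hardy space `H²(𝔻)` (boundary-value formulation). -/
def InH2 {ι κ : Type*} [Fintype ι] [Fintype κ] (X : Circle → Matrix ι κ ℂ) : Prop :=
  MemL2 X ∧ ∀ k : ℤ, k < 0 → mFourierCoeff X k = 0

/-- Membership in `H²(𝔻*)` (boundary-value formulation). -/
def InH2star {ι κ : Type*} [Fintype ι] [Fintype κ] (X : Circle → Matrix ι κ ℂ) : Prop :=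
  MemL2 X ∧ ∀ k : ℤ, 0 < k → mFourierCoeff X k = 0

/-- The outerness condition `log |det X̂(0)| = ∫_𝕋 log |det X|`. -/
def IsOuter {ι : Type*} [Fintype ι] [DecidableEq ι] (X : Circle → Matrix ι ι ℂ) : Prop :=
  Real.log ‖(mFourierCoeff X 0).det‖ =
    ∫ z : Circle, Real.log ‖(X z).det‖ ∂μ

/-- Pointwise conjugate transpose of a matrix-valued function. -/
def cT {ι κ : Type*} (X : Circle → Matrix ι κ ℂ) : Circle → Matrix κ ι ℂ :=
  fun z => (X z)ᴴ

/-- Entrywise a.e. measurability. -/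
def AEMeas {ι κ : Type*} (X : Circle → Matrix ι κ ℂ) : Prop :=
  ∀ i j, AEMeasurable (fun z => X z i j) μ

/-- A measurable matrix function `B : 𝕋 → 𝓒` is Szegő if `∫_𝕋 log det (Id - BB*) > -∞`,
i.e. the (a.e. nonpositive) function `log det (Id - BB*)` is integrable. -/
def Szego {n : ℕ} (B : Circle → Mat n) : Prop :=
  AEMeas B ∧ (∀ᵐ z ∂μ, Contractive (B z)) ∧
    Integrable (fun z => Real.log ‖(1 - B z * (B z)ᴴ).det‖) μ

/-- Upper left `n × n` block of a `2n × 2n` matrix-valued function. -/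
def blockA {n : ℕ} (M : Circle → Mat2 n) : Circle → Mat n := fun z => (M z).toBlocks₁₁

/-- Upper right block. -/
def blockB {n : ℕ} (M : Circle → Mat2 n) : Circle → Mat n := fun z => (M z).toBlocks₁₂

/-- Lower left block. -/
def blockC {n : ℕ} (M : Circle → Mat2 n) : Circle → Mat n := fun z => (M z).toBlocks₂₁

/-- Lower right block. -/
def blockD {n : ℕ} (M : Circle → Mat2 n) : Circle → Mat n := fun z => (M z).toBlocks₂₂

/-- Membership in `𝐁_α`. -/
def MemB {n : ℕ} (α : Fin 2 → Fin 2) (M : Circle → Mat2 n) : Prop :=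
  (∀ i j, AEMeasurable (fun z => M z i j) μ) ∧
  (∀ᵐ z ∂μ, IsSU (M z)) ∧
  Szego (blockB M) ∧ Szego (blockC M) ∧
  InH2 (cT (blockA M)) ∧ IsOuter (cT (blockA M)) ∧
  InH2 (blockD M) ∧ IsOuter (blockD M) ∧
  Triangular (α 0) (mFourierCoeff (blockA M) 0) ∧
  Triangular (α 1) (mFourierCoeff (blockD M) 0)

open Classical in
/-- `Y_α(F)`: the unique element of `SU_α(2n)` with upper right block `F`. -/
def Yc {n : ℕ} (α : Fin 2 → Fin 2) (F : Mat n) : Mat2 n :=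
  if h : ∃ M : Mat2 n, IsSUa α M ∧ M.toBlocks₁₂ = F then h.choose else 1

/-- The conjugation `Ad(w)` acting on `2n × 2n` block matrices. -/
def Ad {n : ℕ} (w : ℂ) (M : Mat2 n) : Mat2 n :=
  Matrix.fromBlocks M.toBlocks₁₁ (w • M.toBlocks₁₂) (w⁻¹ • M.toBlocks₂₁) M.toBlocks₂₂

/-- The ordered product `∏_{j=c}^{d} Ad(z^j) Y_α(F_j)`. -/
def nlftOn {n : ℕ} (α : Fin 2 → Fin 2) (F : ℤ → Mat n) (c d : ℤ) (z : Circle) : Mat2 n :=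
  (((Finset.Icc c d).sort (· ≤ ·)).map fun j => Ad ((z : ℂ) ^ j) (Yc α (F j))).prod

open Classical in
/-- A bound for the support of a finitely supported sequence. -/
def suppBound {n : ℕ} (F : ℤ → Mat n) : ℕ :=
  if h : (Function.support F).Finite then h.toFinset.sup fun j => j.natAbs else 0

/-- The nonlinear Fourier transform `𝓕_α(F)` of a finitely supported sequence of
contractive matrices. -/
def nlft {n : ℕ} (α : Fin 2 → Fin 2) (F : ℤ → Mat n) (z : Circle) : Mat2 n :=
  nlftOn α F (-(suppBound F : ℤ)) (suppBound F : ℤ) z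

/-- The metric `d` on matrix functions on the circle. -/
def metricD {n : ℕ} (M M' : Circle → Mat2 n) : ℝ :=
  Real.sqrt (∫ z : Circle, hsNorm (M z - M' z) ^ 2 ∂μ) +
  |Real.log ‖(mFourierCoeff (blockA M) 0).det‖ -
    Real.log ‖(mFourierCoeff (blockA M') 0).det‖|

/-- Membership in the space `𝐋_α`. -/
def MemL {n : ℕ} (α : Fin 2 → Fin 2) (M : Circle → Mat2 n) : Prop :=
  (∀ᵐ z ∂μ, IsSU (M z)) ∧
  MemL2 (blockA M) ∧ MemL2 (blockB M) ∧ MemL2 (blockC M) ∧ MemL2 (blockD M) ∧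
  (∀ k : ℤ, 0 < k → mFourierCoeff (blockA M) k = 0) ∧
  (∀ k : ℤ, k < 0 → mFourierCoeff (blockD M) k = 0) ∧
  Triangular (α 0) (mFourierCoeff (blockA M) 0) ∧
  Triangular (α 1) (mFourierCoeff (blockD M) 0)

/-- Properties (i) and (ii) in the definition of `𝐇_α⁺`. -/
def Hp12 {n : ℕ} (α : Fin 2 → Fin 2) (M : Circle → Mat2 n) : Prop :=
  InH2 (cT (blockA M)) ∧ InH2 (cT (blockC M)) ∧ InH2 (blockB M) ∧ InH2 (blockD M) ∧
  Triangular (α 0) (mFourierCoeff (blockA M) 0) ∧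
  Triangular (α 1) (mFourierCoeff (blockD M) 0)

/-- Membership in the space `𝐇_α⁺`. -/
def MemHplus {n : ℕ} (α : Fin 2 → Fin 2) (M : Circle → Mat2 n) : Prop :=
  (∀ᵐ z ∂μ, IsSU (M z)) ∧ Hp12 α M ∧
  ∀ (M' : Circle → Mat2 n) (I₁ I₂ : Circle → Mat n),
    (∀ᵐ z ∂μ, IsSU (M' z)) → Hp12 α M' →
    (∀ᵐ z ∂μ, IsUnitary (I₁ z)) → (∀ᵐ z ∂μ, IsUnitary (I₂ z)) →
    InH2 (cT I₁) → InH2 I₂ →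
    (∀ᵐ z ∂μ, M z = M' z * Matrix.fromBlocks (I₁ z) 0 0 (I₂ z)) →
    (∀ᵐ z ∂μ, I₁ z = 1) ∧ (∀ᵐ z ∂μ, I₂ z = 1)

/-- Membership in the space `𝐔_α⁺`: as `𝐇_α⁺` but with `U(2n)` in place of `SU(2n)`. -/
def MemUplus {n : ℕ} (α : Fin 2 → Fin 2) (M : Circle → Mat2 n) : Prop :=
  (∀ᵐ z ∂μ, IsUnitary (M z)) ∧ Hp12 α M ∧
  ∀ (M' : Circle → Mat2 n) (I₁ I₂ : Circle → Mat n),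
    (∀ᵐ z ∂μ, IsUnitary (M' z)) → Hp12 α M' →
    (∀ᵐ z ∂μ, IsUnitary (I₁ z)) → (∀ᵐ z ∂μ, IsUnitary (I₂ z)) →
    InH2 (cT I₁) → InH2 I₂ →
    (∀ᵐ z ∂μ, M z = M' z * Matrix.fromBlocks (I₁ z) 0 0 (I₂ z)) →
    (∀ᵐ z ∂μ, I₁ z = 1) ∧ (∀ᵐ z ∂μ, I₂ z = 1)

/-- Properties (i) and (ii) in the definition of `𝐇⁻_{α,0}`. -/
def Hm12 {n : ℕ} (α : Fin 2 → Fin 2) (M : Circle → Mat2 n) : Prop :=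
  InH2 (cT (blockA M)) ∧ InH2 (blockD M) ∧
  MemL2 (blockB M) ∧ (∀ k : ℤ, 0 ≤ k → mFourierCoeff (blockB M) k = 0) ∧
  MemL2 (blockC M) ∧ (∀ k : ℤ, k ≤ 0 → mFourierCoeff (blockC M) k = 0) ∧
  Triangular (α 0) (mFourierCoeff (blockA M) 0) ∧
  Triangular (α 1) (mFourierCoeff (blockD M) 0)

/-- Membership in the space `𝐇⁻_{α,0}`. -/
def MemHminus {n : ℕ} (α : Fin 2 → Fin 2) (M : Circle → Mat2 n) : Prop :=
  (∀ᵐ z ∂μ, IsSU (M z)) ∧ Hm12 α M ∧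
  ∀ (M' : Circle → Mat2 n) (I₁ I₂ : Circle → Mat n),
    (∀ᵐ z ∂μ, IsSU (M' z)) → Hm12 α M' →
    (∀ᵐ z ∂μ, IsUnitary (I₁ z)) → (∀ᵐ z ∂μ, IsUnitary (I₂ z)) →
    InH2 (cT I₁) → InH2 I₂ →
    (∀ᵐ z ∂μ, M z = Matrix.fromBlocks (I₁ z) 0 0 (I₂ z) * M' z) →
    (∀ᵐ z ∂μ, I₁ z = 1) ∧ (∀ᵐ z ∂μ, I₂ z = 1)

/-- Membership in `ℓ²(ℤ_{≥0}; 𝓒)`. -/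
def L2Half {n : ℕ} (F : ℕ → Mat n) : Prop :=
  (∀ j, Contractive (F j)) ∧ Summable fun j => hsNorm (F j) ^ 2

/-- Membership in `ℓ²(ℤ; 𝓒)`. -/
def L2Z {n : ℕ} (F : ℤ → Mat n) : Prop :=
  (∀ j, Contractive (F j)) ∧ Summable fun j => hsNorm (F j) ^ 2

/-- The `ℓ²` distance between two sequences. -/
def distL2Half {n : ℕ} (F F' : ℕ → Mat n) : ℝ :=
  Real.sqrt (∑' j, hsNorm (F j - F' j) ^ 2)

/-- Extension of a one-sided sequence to `ℤ` by zero. -/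
def extZ {n : ℕ} (F : ℕ → Mat n) : ℤ → Mat n :=
  fun j => if 0 ≤ j then F j.toNat else 0

/-- `Φ` is a continuous extension of the NLFT `𝓕_α` to `ℓ²(ℤ_{≥0}; 𝓒)`, mapping into
`(𝐋_α, d)`. -/
def IsNLFTExtension {n : ℕ} (α : Fin 2 → Fin 2) (Φ : (ℕ → Mat n) → Circle → Mat2 n) : Prop :=
  (∀ F : ℕ → Mat n, (∀ j, Contractive (F j)) → (Function.support F).Finite →
      ∀ᵐ z ∂μ, Φ F z = nlft α (extZ F) z) ∧
  (∀ F, L2Half F → MemL α (Φ F)) ∧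
  (∀ F, L2Half F → ∀ ε : ℝ, 0 < ε → ∃ δ : ℝ, 0 < δ ∧ ∀ F', L2Half F' →
      distL2Half F F' < δ → metricD (Φ F) (Φ F') < ε)

/-- The truncation of a two-sided sequence to `[-N, N]`. -/
def truncZ {n : ℕ} (F : ℤ → Mat n) (N : ℕ) : ℤ → Mat n :=
  fun j => if j.natAbs ≤ N then F j else 0

/-- `𝓕_α(F) = M` for a two-sided square-summable sequence `F`, formulated as convergence
in the metric `d` of the NLFTs of the truncations of `F`. -/
def NLFTeq {n : ℕ} (α : Fin 2 → Fin 2) (F : ℤ → Mat n) (M : Circle → Mat2 n) : Prop :=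
  Tendsto (fun N : ℕ => metricD (nlft α (truncZ F N)) M) atTop (nhds 0)

/- ===================== Auxiliary lemmas ===================== -/

section Aux

variable {n : ℕ}

lemma circle_coe_zpow (z : Circle) (m : ℤ) : ((z ^ m : Circle) : ℂ) = (z : ℂ) ^ m :=
  map_zpow' Circle.coeHom Circle.coe_inv z m

lemma continuous_czpow (m : ℤ) : Continuous fun z : Circle => (z : ℂ) ^ m := by
  have : (fun z : Circle => (z : ℂ) ^ m) = fun z : Circle => ((z ^ m : Circle) : ℂ) := by
    ext z; rw [circle_coe_zpow]
  rw [this]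
  exact continuous_induced_dom.comp (continuous_zpow m)

instance : IsProbabilityMeasure (μ) := by
  haveI : Fact (0 < 2 * Real.pi) := ⟨Real.two_pi_pos⟩
  exact Measure.isProbabilityMeasure_map (AddCircle.continuous_toCircle.measurable.aemeasurable)

lemma integral_czpow (m : ℤ) : (∫ z : Circle, (z : ℂ) ^ m ∂μ) = if m = 0 then 1 else 0 := by
  haveI : Fact (0 < 2 * Real.pi) := ⟨Real.two_pi_pos⟩
  have hmeas : AEStronglyMeasurable (fun z : Circle => (z : ℂ) ^ m) μ :=
    (continuous_czpow m).aestronglyMeasurable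
  rw [μ, integral_map AddCircle.continuous_toCircle.measurable.aemeasurable (by rwa [← μ])]
  have key : ∀ x : AddCircle (2 * Real.pi), ((AddCircle.toCircle x : Circle) : ℂ) ^ m
      = fourier m x := by
    intro x
    rw [fourier_apply, ← circle_coe_zpow]
    congr 1
    apply Additive.ofMul.injective
    have := (AddMonoidHom.mk' (fun y : AddCircle (2 * Real.pi) => Additive.ofMul (AddCircle.toCircle y))
      (fun a b => congrArg Additive.ofMul (AddCircle.toCircle_add a b))).map_zsmul m x
    exact congrArg Additive.ofMul (by simp [← ofMul_zpow] at this; exact this.symm)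
  simp_rw [key]
  rcases eq_or_ne m 0 with rfl | hm
  · simp only [if_pos rfl]
    have : ⇑(fourier (T := 2 * Real.pi) 0) = (fun _ => 1 : AddCircle (2 * Real.pi) → ℂ) := by
      ext1; exact fourier_zero
    rw [this, integral_const, probReal_univ]
    simp
  · rw [if_neg hm]
    exact integral_eq_zero_of_add_right_eq_neg (μ := AddCircle.haarAddCircle)
      (fourier_add_half_inv_index hm Real.two_pi_pos)

lemma integrable_czpow_mul (m : ℤ) (c : ℂ) :
    Integrable (fun z : Circle => (z : ℂ) ^ m * c) μ := by
  refine (integrable_const ‖c‖).mono'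
    (((continuous_czpow m).mul continuous_const).aestronglyMeasurable) ?_
  filter_upwards with z
  rw [norm_mul]
  have : ‖(z : ℂ) ^ m‖ = 1 := by
    rw [norm_zpow, Circle.norm_coe, _root_.one_zpow]
  simp [this]

/-- `f` is a matrix Laurent polynomial with coefficients `Q` supported in `s`. -/
def Rep (f : Circle → Mat n) (s : Finset ℤ) (Q : ℤ → Mat n) : Prop :=
  ∀ z : Circle, f z = ∑ k ∈ s, (z : ℂ) ^ k • Q k

lemma Rep.coeff {f : Circle → Mat n} {s : Finset ℤ} {Q : ℤ → Mat n} (h : Rep f s Q) (k : ℤ) :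
    mFourierCoeff f k = if k ∈ s then Q k else 0 := by
  ext i j
  have hfz : ∀ z : Circle, (z : ℂ) ^ (-k) * f z i j = ∑ m ∈ s, (z : ℂ) ^ (m - k) * Q m i j := by
    intro z
    rw [h z]
    simp only [Matrix.sum_apply, Matrix.smul_apply, smul_eq_mul, Finset.mul_sum]
    refine Finset.sum_congr rfl fun m _ => ?_
    rw [← mul_assoc, ← zpow_add₀ (Circle.coe_ne_zero z)]
    ring_nf
  have : mFourierCoeff f k i j = ∑ m ∈ s, (if m = k then (1 : ℂ) else 0) * Q m i j := by
    show (∫ z : Circle, (z : ℂ) ^ (-k) * f z i j ∂μ) = _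
    simp_rw [hfz]
    rw [integral_finset_sum _ fun m _ => integrable_czpow_mul (m - k) (Q m i j)]
    refine Finset.sum_congr rfl fun m _ => ?_
    rw [integral_mul_const, integral_czpow]
    congr 1
    simp [sub_eq_zero]
  rw [this]
  simp_rw [ite_mul, one_mul, zero_mul]
  rw [Finset.sum_ite_eq' s k (fun m => Q m i j)]
  by_cases hk : k ∈ s <;> simp [hk]

lemma Rep.mono {f : Circle → Mat n} {s s' : Finset ℤ} {Q : ℤ → Mat n} (h : Rep f s Q)
    (hs : s ⊆ s') : Rep f s' (fun k => if k ∈ s then Q k else 0) := by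
  intro z
  rw [h z, ← Finset.sum_subset hs (fun m _ hm => by simp [hm])]
  exact Finset.sum_congr rfl fun m hm => by simp [hm]

lemma Rep.add {f g : Circle → Mat n} {s : Finset ℤ} {Q R : ℤ → Mat n} (hf : Rep f s Q)
    (hg : Rep g s R) : Rep (fun z => f z + g z) s (fun k => Q k + R k) := by
  intro z
  show f z + g z = _
  rw [hf z, hg z, ← Finset.sum_add_distrib]
  exact Finset.sum_congr rfl fun m _ => (smul_add _ _ _).symm

lemma Rep.mulRight {f : Circle → Mat n} {s : Finset ℤ} {Q : ℤ → Mat n} (h : Rep f s Q)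
    (X : Mat n) : Rep (fun z => f z * X) s (fun k => Q k * X) := by
  intro z
  show f z * X = _
  rw [h z, Finset.sum_mul]
  exact Finset.sum_congr rfl fun m _ => Matrix.smul_mul _ _ _

lemma Rep.shift {f : Circle → Mat n} {a b : ℤ} {Q : ℤ → Mat n} (h : Rep f (Finset.Icc a b) Q)
    (j : ℤ) : Rep (fun z => (z : ℂ) ^ j • f z) (Finset.Icc (a + j) (b + j)) (fun k => Q (k - j)) := by
  intro z
  show (z : ℂ) ^ j • f z = _
  rw [h z, Finset.smul_sum]
  rw [show Finset.Icc (a + j) (b + j) = (Finset.Icc a b).map (addRightEmbedding j) by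
    rw [Finset.map_add_right_Icc]]
  rw [Finset.sum_map]
  refine Finset.sum_congr rfl fun m _ => ?_
  simp only [addRightEmbedding_apply, add_sub_cancel_right]
  rw [smul_smul, ← zpow_add₀ (Circle.coe_ne_zero z), add_comm]

lemma Rep.const (X : Mat n) : Rep (fun _ => X) (Finset.Icc 0 0) (fun _ => X) := by
  intro z
  show X = _
  rw [Finset.Icc_self, Finset.sum_singleton, zpow_zero, one_smul]

lemma Rep.congr {f g : Circle → Mat n} {s : Finset ℤ} {Q : ℤ → Mat n} (h : Rep f s Q)
    (hg : ∀ z, g z = f z) : Rep g s Q := fun z => (hg z).trans (h z)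

/- ----- triangular matrices ----- -/

lemma Triangular.one {a : Fin 2} : Triangular a (1 : Mat n) := by
  constructor
  · intro i j h
    by_cases ha : a = 0
    · rw [if_pos ha] at h; exact Matrix.one_apply_ne (ne_of_gt h)
    · rw [if_neg ha] at h; exact Matrix.one_apply_ne (ne_of_lt h)
  · intro i; simp

lemma tri_mul_apply {a : Fin 2} {M N : Mat n} (hM : Triangular a M) (hN : Triangular a N)
    (i : Fin n) : (M * N) i i = M i i * N i i := by
  rw [Matrix.mul_apply]
  refine Finset.sum_eq_single i (fun k _ hk => ?_) (by simp)
  by_cases ha : a = 0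
  · rcases lt_or_ge k i with h | h
    · rw [hM.1 i k (by rw [if_pos ha]; exact h), zero_mul]
    · rw [hN.1 k i (by rw [if_pos ha]; exact lt_of_le_of_ne h (Ne.symm hk)), mul_zero]
  · rcases lt_or_ge i k with h | h
    · rw [hM.1 i k (by rw [if_neg ha]; exact h), zero_mul]
    · rw [hN.1 k i (by rw [if_neg ha]; exact lt_of_le_of_ne h hk), mul_zero]

lemma Triangular.mul {a : Fin 2} {M N : Mat n} (hM : Triangular a M) (hN : Triangular a N) :
    Triangular a (M * N) := by
  constructor
  · intro i j h
    rw [Matrix.mul_apply]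
    refine Finset.sum_eq_zero fun k _ => ?_
    by_cases ha : a = 0
    · rw [if_pos ha] at h
      rcases lt_or_ge k i with hk | hk
      · rw [hM.1 i k (by rw [if_pos ha]; exact hk), zero_mul]
      · rw [hN.1 k j (by rw [if_pos ha]; exact lt_of_lt_of_le h hk), mul_zero]
    · rw [if_neg ha] at h
      rcases lt_or_ge i k with hk | hk
      · rw [hM.1 i k (by rw [if_neg ha]; exact hk), zero_mul]
      · rw [hN.1 k j (by rw [if_neg ha]; exact lt_of_le_of_lt hk h), mul_zero]
  · intro i
    rw [tri_mul_apply hM hN i, Complex.mul_re, Complex.mul_im, (hM.2 i).2, (hN.2 i).2]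
    constructor
    · simpa using mul_pos (hM.2 i).1 (hN.2 i).1
    · ring

lemma Triangular.listProd {a : Fin 2} (l : List (Mat n)) (h : ∀ M ∈ l, Triangular a M) :
    Triangular a l.prod := by
  induction l with
  | nil => exact Triangular.one
  | cons M l ih =>
    rw [List.prod_cons]
    exact (h M (List.mem_cons_self)).mul (ih fun N hN => h N (List.mem_cons_of_mem M hN))

lemma Triangular.det_ne_zero {a : Fin 2} {M : Mat n} (h : Triangular a M) : M.det ≠ 0 := by
  have hd : M.det = ∏ i, M i i := by
    by_cases ha : a = 0
    · exact Matrix.det_of_upperTriangular fun i j hij => h.1 i j (by rw [if_pos ha]; exact hij)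
    · exact Matrix.det_of_lowerTriangular M fun i j hij => h.1 i j (by rw [if_neg ha]; exact hij)
  rw [hd]
  exact Finset.prod_ne_zero_iff.2 fun i _ hz => by
    have := (h.2 i).1; rw [hz] at this; simp at this

lemma triangular_unitary_eq_one {a : Fin 2} {A : Mat n} (ht : Triangular a A)
    (h1 : A * Aᴴ = 1) : A = 1 := by
  haveI : Invertible A := A.invertibleOfIsUnitDet (Ne.isUnit ht.det_ne_zero)
  have hinv : A⁻¹ = Aᴴ := Matrix.inv_eq_right_inv h1
  have hop : ∀ i j : Fin n, (if a = 0 then i < j else j < i) → A i j = 0 := by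
    by_cases ha : a = 0
    · have hb : BlockTriangular A (id : Fin n → Fin n) := fun i j hij =>
        ht.1 i j (by rw [if_pos ha]; exact hij)
      have hbi := Matrix.blockTriangular_inv_of_blockTriangular hb
      rw [hinv] at hbi
      intro i j hij
      rw [if_pos ha] at hij
      have := hbi (i := j) (j := i) hij
      rw [Matrix.conjTranspose_apply] at this
      simpa using this
    · have hb : BlockTriangular A (OrderDual.toDual : Fin n → (Fin n)ᵒᵈ) := fun i j hij =>
        ht.1 i j (by rw [if_neg ha]; exact hij)
      have hbi := Matrix.blockTriangular_inv_of_blockTriangular hb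
      rw [hinv] at hbi
      intro i j hij
      rw [if_neg ha] at hij
      have := hbi (i := j) (j := i) hij
      rw [Matrix.conjTranspose_apply] at this
      simpa using this
  have hdiag : ∀ i j : Fin n, i ≠ j → A i j = 0 := by
    intro i j hij
    rcases lt_or_gt_of_ne hij with h | h
    · by_cases ha : a = 0
      · exact hop i j (by rw [if_pos ha]; exact h)
      · exact ht.1 i j (by rw [if_neg ha]; exact h)
    · by_cases ha : a = 0
      · exact ht.1 i j (by rw [if_pos ha]; exact h)
      · exact hop i j (by rw [if_neg ha]; exact h)
  ext i j
  rcases eq_or_ne i j with rfl | hij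
  · have hAA : (A * Aᴴ) i i = A i i * (starRingEnd ℂ) (A i i) := by
      rw [Matrix.mul_apply]
      refine Finset.sum_eq_single i (fun k _ hk => ?_) (by simp)
      rw [Matrix.conjTranspose_apply, hdiag i k (Ne.symm hk), zero_mul]
    rw [h1] at hAA
    have hre : A i i = ((A i i).re : ℂ) := Complex.ext rfl (by simp [(ht.2 i).2])
    have h1' : (A i i).re * (A i i).re = 1 := by
      have h2 := hAA
      rw [Matrix.one_apply_eq, hre, Complex.conj_ofReal, ← Complex.ofReal_mul] at h2
      exact_mod_cast h2.symm
    have : (A i i).re = 1 := by nlinarith [(ht.2 i).1]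
    rw [Matrix.one_apply_eq, hre, this, Complex.ofReal_one]
  · rw [hdiag i j hij, Matrix.one_apply_ne hij]

/- ----- Yc ----- -/

lemma Yc_zero (α : Fin 2 → Fin 2) : Yc α (0 : Mat n) = 1 := by
  rw [Yc]
  split
  · next h =>
    obtain ⟨⟨⟨hU, _⟩, htA, htD⟩, hB⟩ := h.choose_spec
    set M := h.choose with hM
    have hMM : M * Mᴴ = 1 := mul_eq_one_comm.mp hU
    have hblk : M = Matrix.fromBlocks M.toBlocks₁₁ 0 M.toBlocks₂₁ M.toBlocks₂₂ := by
      rw [← hB, Matrix.fromBlocks_toBlocks]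
    set A := M.toBlocks₁₁
    set C := M.toBlocks₂₁
    set D := M.toBlocks₂₂
    rw [hblk, Matrix.fromBlocks_conjTranspose, Matrix.fromBlocks_multiply] at hMM
    simp only [Matrix.conjTranspose_zero, Matrix.mul_zero, Matrix.zero_mul, add_zero,
      zero_add, ← Matrix.fromBlocks_one] at hMM
    rw [Matrix.fromBlocks_inj] at hMM
    obtain ⟨hAA', hAC, hCA, hCD⟩ := hMM
    have hA1 : A = 1 := triangular_unitary_eq_one htA (by simpa using hAA')
    have hC0 : C = 0 := by
      have := hAC
      rw [hA1, Matrix.one_mul] at this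
      simpa using congrArg Matrix.conjTranspose this
    have hD1 : D = 1 := triangular_unitary_eq_one htD (by
      rw [← hCD, hC0]; simp)
    rw [hblk]
    show Matrix.fromBlocks A 0 C D = 1
    rw [hA1, hC0, hD1, Matrix.fromBlocks_one]
  · rfl

lemma Yc_triangular (α : Fin 2 → Fin 2) (F : Mat n) :
    Triangular (α 0) ((Yc α F).toBlocks₁₁) ∧ Triangular (α 1) ((Yc α F).toBlocks₂₂) := by
  rw [Yc]
  split
  · next h => exact h.choose_spec.1.2
  · constructor <;>
    · rw [show (1 : Mat2 n) = Matrix.fromBlocks 1 0 0 1 from (Matrix.fromBlocks_one).symm]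
      simp only [Matrix.toBlocks_fromBlocks₁₁, Matrix.toBlocks_fromBlocks₂₂]
      exact Triangular.one

/- ----- sorted interval lists and layer products ----- -/

lemma sort_Icc (a b : ℤ) : (Finset.Icc a b).sort (· ≤ ·)
    = (List.range (b + 1 - a).toNat).map (fun i : ℕ => a + (i : ℤ)) := by
  refine (fun hp h2 => List.Perm.eq_of_pairwise' (r := fun x y : ℤ => x ≤ y) (Finset.pairwise_sort _ _) h2 hp) ?_ ?_
  · apply List.perm_of_nodup_nodup_toFinset_eq (Finset.sort_nodup _ _)
    · exact List.nodup_range.map (fun x y h => by omega)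
    · rw [Finset.sort_toFinset]
      ext k
      simp only [List.mem_toFinset, List.mem_map, List.mem_range, Finset.mem_Icc]
      constructor
      · rintro ⟨h1, h2⟩; exact ⟨(k - a).toNat, by omega, by omega⟩
      · rintro ⟨i, hi, rfl⟩; omega
  · exact List.Pairwise.map _ (fun x y (h : x < y) => by omega) List.pairwise_lt_range

lemma Ad_one (w : ℂ) : Ad w (1 : Mat2 n) = 1 := by
  rw [Ad, show (1 : Mat2 n) = Matrix.fromBlocks 1 0 0 1 from Matrix.fromBlocks_one.symm,
    Matrix.toBlocks_fromBlocks₁₁, Matrix.toBlocks_fromBlocks₁₂,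
    Matrix.toBlocks_fromBlocks₂₁, Matrix.toBlocks_fromBlocks₂₂, smul_zero, smul_zero]

/-- Ordered product of the `Ad`-conjugated layers for indices `a, a+1, …, a+t-1`. -/
def pl (α : Fin 2 → Fin 2) (F : ℤ → Mat n) (z : Circle) (a : ℤ) (t : ℕ) : Mat2 n :=
  ((List.range t).map fun i : ℕ => Ad ((z : ℂ) ^ (a + (i : ℤ))) (Yc α (F (a + (i : ℤ))))).prod

variable (α : Fin 2 → Fin 2) (F : ℤ → Mat n) (z : Circle)

lemma pl_zero (a : ℤ) : pl α F z a 0 = 1 := by simp [pl]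

lemma pl_succ_right (a : ℤ) (t : ℕ) :
    pl α F z a (t + 1) = pl α F z a t * Ad ((z : ℂ) ^ (a + (t : ℤ))) (Yc α (F (a + (t : ℤ)))) := by
  rw [pl, List.range_succ, List.map_append, List.prod_append]
  simp [pl]

lemma pl_succ_left (a : ℤ) (t : ℕ) :
    pl α F z a (t + 1) = Ad ((z : ℂ) ^ a) (Yc α (F a)) * pl α F z (a + 1) t := by
  rw [pl, List.range_succ_eq_map, List.map_cons, List.prod_cons, List.map_map]
  have : ((fun i : ℕ => Ad ((z : ℂ) ^ (a + (i : ℤ))) (Yc α (F (a + (i : ℤ))))) ∘ Nat.succ)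
      = fun i : ℕ => Ad ((z : ℂ) ^ (a + 1 + (i : ℤ))) (Yc α (F (a + 1 + (i : ℤ)))) := by
    funext i
    simp only [Function.comp_apply]
    have : a + (↑(Nat.succ i) : ℤ) = a + 1 + (i : ℤ) := by push_cast; ring
    rw [this]
  rw [this]
  simp [pl]

lemma pl_ext_right (a : ℤ) (t : ℕ) (s : ℕ) (h : ∀ i : ℕ, i < s → F (a + (t : ℤ) + (i : ℤ)) = 0) :
    pl α F z a (t + s) = pl α F z a t := by
  induction s with
  | zero => rfl
  | succ s ih =>
    rw [show t + (s + 1) = (t + s) + 1 by ring, pl_succ_right,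
      show a + ((t + s : ℕ) : ℤ) = a + (t : ℤ) + (s : ℤ) by push_cast; ring,
      h s (by omega), Yc_zero, Ad_one, mul_one]
    exact ih fun i hi => h i (by omega)

lemma pl_ext_left (a : ℤ) (t : ℕ) (s : ℕ) (h : ∀ i : ℕ, i < s → F (a + (i : ℤ)) = 0) :
    pl α F z a (s + t) = pl α F z (a + (s : ℤ)) t := by
  induction s generalizing a with
  | zero => simp
  | succ s ih =>
    rw [show s + 1 + t = (s + t) + 1 by ring, pl_succ_left,
      show F a = 0 by simpa using h 0 (by omega), Yc_zero, Ad_one, one_mul]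
    rw [ih (a + 1) fun i hi => by
      rw [show a + 1 + (i : ℤ) = a + ((i + 1 : ℕ) : ℤ) by push_cast; ring]
      exact h (i + 1) (by omega)]
    norm_num
    ring

lemma nlftOn_eq_pl (a b : ℤ) : nlftOn α F a b z = pl α F z a (b + 1 - a).toNat := by
  rw [nlftOn, sort_Icc, List.map_map, pl]
  rfl

lemma nlft_eq_pl (c d : ℤ) (hcd : c ≤ d) (hsupp : ∀ j : ℤ, j ∉ Finset.Icc c d → F j = 0) :
    nlft α F z = pl α F z c (d + 1 - c).toNat := by
  have hfin : (Function.support F).Finite := by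
    apply Set.Finite.subset (Finset.Icc c d).finite_toSet
    intro j hj
    simp only [Finset.coe_Icc, Set.mem_Icc]
    by_contra hc
    exact hj (hsupp j (by simp only [Finset.mem_Icc]; omega))
  set N := suppBound F with hN
  have hNval : ∀ j : ℤ, F j ≠ 0 → j.natAbs ≤ N := by
    intro j hj
    rw [hN, suppBound, dif_pos hfin]
    exact Finset.le_sup (by simpa [Set.Finite.mem_toFinset] using hj)
  have hzero : ∀ j : ℤ, (N : ℤ) < j ∨ j < -(N : ℤ) → F j = 0 := by
    intro j hj
    by_contra hc
    have := hNval j hc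
    omega
  have hzero' : ∀ j : ℤ, j < c ∨ d < j → F j = 0 := fun j hj =>
    hsupp j (by simp only [Finset.mem_Icc]; omega)
  set e : ℤ := min (-(N : ℤ)) c with he
  set f : ℤ := max (N : ℤ) d with hf
  have hef : nlft α F z = pl α F z e (f + 1 - e).toNat := by
    rw [nlft, nlftOn_eq_pl]
    set s := (-(N : ℤ) - e).toNat with hs
    set t := ((N : ℤ) + 1 - (-(N : ℤ))).toNat with ht
    set s' := (f - (N : ℤ)).toNat with hs'
    have htot : (f + 1 - e).toNat = s + (t + s') := by omega
    rw [htot, pl_ext_left α F z e (t + s') s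
      (fun i hi => hzero _ (by omega)),
      show e + (s : ℤ) = -(N : ℤ) by omega,
      pl_ext_right α F z (-(N : ℤ)) t s' (fun i hi => hzero _ (by omega))]
  rw [hef]
  set s := (c - e).toNat with hs
  set t := (d + 1 - c).toNat with ht
  set s' := (f - d).toNat with hs'
  have htot : (f + 1 - e).toNat = s + (t + s') := by omega
  rw [htot, pl_ext_left α F z e (t + s') s (fun i hi => hzero' _ (by omega)),
    show e + (s : ℤ) = c by omega,
    pl_ext_right α F z c t s' (fun i hi => hzero' _ (by omega))]

/- ----- block formulas ----- -/

lemma Ad_toBlocks₁₁ (w : ℂ) (Y : Mat2 n) : (Ad w Y).toBlocks₁₁ = Y.toBlocks₁₁ := by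
  rw [Ad, Matrix.toBlocks_fromBlocks₁₁]
lemma Ad_toBlocks₁₂ (w : ℂ) (Y : Mat2 n) : (Ad w Y).toBlocks₁₂ = w • Y.toBlocks₁₂ := by
  rw [Ad, Matrix.toBlocks_fromBlocks₁₂]
lemma Ad_toBlocks₂₁ (w : ℂ) (Y : Mat2 n) : (Ad w Y).toBlocks₂₁ = w⁻¹ • Y.toBlocks₂₁ := by
  rw [Ad, Matrix.toBlocks_fromBlocks₂₁]
lemma Ad_toBlocks₂₂ (w : ℂ) (Y : Mat2 n) : (Ad w Y).toBlocks₂₂ = Y.toBlocks₂₂ := by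
  rw [Ad, Matrix.toBlocks_fromBlocks₂₂]

lemma mul_Ad_toBlocks₁₁ (P Y : Mat2 n) (w : ℂ) :
    (P * Ad w Y).toBlocks₁₁
      = P.toBlocks₁₁ * Y.toBlocks₁₁ + w⁻¹ • (P.toBlocks₁₂ * Y.toBlocks₂₁) := by
  conv_lhs => rw [← Matrix.fromBlocks_toBlocks P]
  rw [Ad, Matrix.fromBlocks_multiply, Matrix.toBlocks_fromBlocks₁₁, Matrix.mul_smul]

lemma mul_Ad_toBlocks₁₂ (P Y : Mat2 n) (w : ℂ) :
    (P * Ad w Y).toBlocks₁₂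
      = w • (P.toBlocks₁₁ * Y.toBlocks₁₂) + P.toBlocks₁₂ * Y.toBlocks₂₂ := by
  conv_lhs => rw [← Matrix.fromBlocks_toBlocks P]
  rw [Ad, Matrix.fromBlocks_multiply, Matrix.toBlocks_fromBlocks₁₂, Matrix.mul_smul]

lemma mul_Ad_toBlocks₂₁ (P Y : Mat2 n) (w : ℂ) :
    (P * Ad w Y).toBlocks₂₁
      = P.toBlocks₂₁ * Y.toBlocks₁₁ + w⁻¹ • (P.toBlocks₂₂ * Y.toBlocks₂₁) := by
  conv_lhs => rw [← Matrix.fromBlocks_toBlocks P]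
  rw [Ad, Matrix.fromBlocks_multiply, Matrix.toBlocks_fromBlocks₂₁, Matrix.mul_smul]

lemma mul_Ad_toBlocks₂₂ (P Y : Mat2 n) (w : ℂ) :
    (P * Ad w Y).toBlocks₂₂
      = w • (P.toBlocks₂₁ * Y.toBlocks₁₂) + P.toBlocks₂₂ * Y.toBlocks₂₂ := by
  conv_lhs => rw [← Matrix.fromBlocks_toBlocks P]
  rw [Ad, Matrix.fromBlocks_multiply, Matrix.toBlocks_fromBlocks₂₂, Matrix.mul_smul]

lemma pl_one_eq (c : ℤ) : pl α F z c 1 = Ad ((z : ℂ) ^ c) (Yc α (F c)) := by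
  have := pl_succ_right α F z c 0
  rw [pl_zero, one_mul] at this
  simpa using this

end Aux

/- ----- the main induction ----- -/

lemma main_ind {n : ℕ} (α : Fin 2 → Fin 2) (F : ℤ → Mat n) (c : ℤ) (t : ℕ) :
    ∃ QA QB QC QD : ℤ → Mat n,
      Rep (fun z => (pl α F z c (t + 1)).toBlocks₁₁) (Finset.Icc (-(t : ℤ)) 0) QA ∧
      Rep (fun z => (pl α F z c (t + 1)).toBlocks₁₂) (Finset.Icc c (c + (t : ℤ))) QB ∧
      Rep (fun z => (pl α F z c (t + 1)).toBlocks₂₁) (Finset.Icc (-(c + (t : ℤ))) (-c)) QC ∧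
      Rep (fun z => (pl α F z c (t + 1)).toBlocks₂₂) (Finset.Icc 0 (t : ℤ)) QD ∧
      QA 0 = ((List.range (t + 1)).map fun i : ℕ => (Yc α (F (c + (i : ℤ)))).toBlocks₁₁).prod ∧
      QD 0 = ((List.range (t + 1)).map fun i : ℕ => (Yc α (F (c + (i : ℤ)))).toBlocks₂₂).prod ∧
      QB c = (Yc α (F c)).toBlocks₁₂ *
        ((List.range t).map fun i : ℕ => (Yc α (F (c + 1 + (i : ℤ)))).toBlocks₂₂).prod ∧
      QC (-c) = (Yc α (F c)).toBlocks₂₁ *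
        ((List.range t).map fun i : ℕ => (Yc α (F (c + 1 + (i : ℤ)))).toBlocks₁₁).prod := by
  induction t with
  | zero =>
    refine ⟨fun _ => (Yc α (F c)).toBlocks₁₁, fun _ => (Yc α (F c)).toBlocks₁₂,
      fun _ => (Yc α (F c)).toBlocks₂₁, fun _ => (Yc α (F c)).toBlocks₂₂,
      ?_, ?_, ?_, ?_, by simp [List.range_succ], by simp [List.range_succ],
      by simp [List.range_succ], by simp [List.range_succ]⟩
    · intro z
      show (pl α F z c 1).toBlocks₁₁ = _
      rw [pl_one_eq, Ad_toBlocks₁₁]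
      simp
    · intro z
      show (pl α F z c 1).toBlocks₁₂ = _
      rw [pl_one_eq, Ad_toBlocks₁₂]
      simp
    · intro z
      show (pl α F z c 1).toBlocks₂₁ = _
      rw [pl_one_eq, Ad_toBlocks₂₁]
      simp [_root_.zpow_neg]
    · intro z
      show (pl α F z c 1).toBlocks₂₂ = _
      rw [pl_one_eq, Ad_toBlocks₂₂]
      simp
  | succ t ih =>
    obtain ⟨QA, QB, QC, QD, hA, hB, hC, hD, hA0, hD0, hBc, hCc⟩ := ih
    set j : ℤ := c + (t : ℤ) + 1 with hj
    have hcast : c + ((t + 1 : ℕ) : ℤ) = j := by omega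
    have hsplit : ∀ z : Circle,
        pl α F z c (t + 1 + 1) = pl α F z c (t + 1) * Ad ((z : ℂ) ^ j) (Yc α (F j)) := by
      intro z
      rw [pl_succ_right, hcast]
    have hstep11 : ((List.range (t + 1 + 1)).map
        (fun i : ℕ => (Yc α (F (c + (i : ℤ)))).toBlocks₁₁)).prod
          = ((List.range (t + 1)).map (fun i : ℕ => (Yc α (F (c + (i : ℤ)))).toBlocks₁₁)).prod
            * (Yc α (F j)).toBlocks₁₁ := by
      rw [List.range_succ, List.map_append, List.prod_append]
      simp only [List.map_cons, List.map_nil, List.prod_cons, List.prod_nil, mul_one]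
      rw [hcast]
    have hstep22 : ((List.range (t + 1 + 1)).map
        (fun i : ℕ => (Yc α (F (c + (i : ℤ)))).toBlocks₂₂)).prod
          = ((List.range (t + 1)).map (fun i : ℕ => (Yc α (F (c + (i : ℤ)))).toBlocks₂₂)).prod
            * (Yc α (F j)).toBlocks₂₂ := by
      rw [List.range_succ, List.map_append, List.prod_append]
      simp only [List.map_cons, List.map_nil, List.prod_cons, List.prod_nil, mul_one]
      rw [hcast]
    have hcast' : c + 1 + (t : ℤ) = j := by omega
    have hstep22' : ((List.range (t + 1)).map
        (fun i : ℕ => (Yc α (F (c + 1 + (i : ℤ)))).toBlocks₂₂)).prod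
          = ((List.range t).map (fun i : ℕ => (Yc α (F (c + 1 + (i : ℤ)))).toBlocks₂₂)).prod
            * (Yc α (F j)).toBlocks₂₂ := by
      rw [List.range_succ, List.map_append, List.prod_append]
      simp only [List.map_cons, List.map_nil, List.prod_cons, List.prod_nil, mul_one]
      rw [hcast']
    have hstep11' : ((List.range (t + 1)).map
        (fun i : ℕ => (Yc α (F (c + 1 + (i : ℤ)))).toBlocks₁₁)).prod
          = ((List.range t).map (fun i : ℕ => (Yc α (F (c + 1 + (i : ℤ)))).toBlocks₁₁)).prod
            * (Yc α (F j)).toBlocks₁₁ := by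
      rw [List.range_succ, List.map_append, List.prod_append]
      simp only [List.map_cons, List.map_nil, List.prod_cons, List.prod_nil, mul_one]
      rw [hcast']
    -- new coefficient functions
    refine ⟨fun k => (if k ∈ Finset.Icc (-(t : ℤ)) 0 then QA k * (Yc α (F j)).toBlocks₁₁ else 0)
        + (if k ∈ Finset.Icc (c + -j) (c + (t : ℤ) + -j) then QB (k - -j) * (Yc α (F j)).toBlocks₂₁ else 0),
      fun k => (if k ∈ Finset.Icc (-(t : ℤ) + j) (0 + j) then QA (k - j) * (Yc α (F j)).toBlocks₁₂ else 0)
        + (if k ∈ Finset.Icc c (c + (t : ℤ)) then QB k * (Yc α (F j)).toBlocks₂₂ else 0),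
      fun k => (if k ∈ Finset.Icc (-(c + (t : ℤ))) (-c) then QC k * (Yc α (F j)).toBlocks₁₁ else 0)
        + (if k ∈ Finset.Icc (0 + -j) ((t : ℤ) + -j) then QD (k - -j) * (Yc α (F j)).toBlocks₂₁ else 0),
      fun k => (if k ∈ Finset.Icc (-(c + (t : ℤ)) + j) (-c + j) then QC (k - j) * (Yc α (F j)).toBlocks₁₂ else 0)
        + (if k ∈ Finset.Icc 0 (t : ℤ) then QD k * (Yc α (F j)).toBlocks₂₂ else 0),
      ?_, ?_, ?_, ?_, ?_, ?_, ?_, ?_⟩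
    · -- Rep for the new A block
      have h2 := ((hB.mulRight (Yc α (F j)).toBlocks₂₁).shift (-j)).mono
        (Finset.Icc_subset_Icc (a₂ := -((t + 1 : ℕ) : ℤ)) (b₂ := 0) (by omega) (by omega))
      have h1 := (hA.mulRight (Yc α (F j)).toBlocks₁₁).mono
        (Finset.Icc_subset_Icc (a₂ := -((t + 1 : ℕ) : ℤ)) (b₂ := 0) (by omega) (by omega))
      intro z
      show (pl α F z c (t + 1 + 1)).toBlocks₁₁ = _
      rw [hsplit z, mul_Ad_toBlocks₁₁]
      have := (h1.add h2) z
      simpa only [_root_.zpow_neg] using this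
    · -- Rep for the new B block
      have h1 := ((hA.mulRight (Yc α (F j)).toBlocks₁₂).shift j).mono
        (Finset.Icc_subset_Icc (a₂ := c) (b₂ := c + ((t + 1 : ℕ) : ℤ)) (by omega) (by omega))
      have h2 := (hB.mulRight (Yc α (F j)).toBlocks₂₂).mono
        (Finset.Icc_subset_Icc (a₂ := c) (b₂ := c + ((t + 1 : ℕ) : ℤ)) (by omega) (by omega))
      intro z
      show (pl α F z c (t + 1 + 1)).toBlocks₁₂ = _
      rw [hsplit z, mul_Ad_toBlocks₁₂]
      exact (h1.add h2) z
    · -- Rep for the new C block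
      have h1 := (hC.mulRight (Yc α (F j)).toBlocks₁₁).mono
        (Finset.Icc_subset_Icc (a₂ := -(c + ((t + 1 : ℕ) : ℤ))) (b₂ := -c) (by omega) (by omega))
      have h2 := ((hD.mulRight (Yc α (F j)).toBlocks₂₁).shift (-j)).mono
        (Finset.Icc_subset_Icc (a₂ := -(c + ((t + 1 : ℕ) : ℤ))) (b₂ := -c) (by omega) (by omega))
      intro z
      show (pl α F z c (t + 1 + 1)).toBlocks₂₁ = _
      rw [hsplit z, mul_Ad_toBlocks₂₁]
      have := (h1.add h2) z
      simpa only [_root_.zpow_neg] using this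
    · -- Rep for the new D block
      have h1 := ((hC.mulRight (Yc α (F j)).toBlocks₁₂).shift j).mono
        (Finset.Icc_subset_Icc (a₂ := 0) (b₂ := ((t + 1 : ℕ) : ℤ)) (by omega) (by omega))
      have h2 := (hD.mulRight (Yc α (F j)).toBlocks₂₂).mono
        (Finset.Icc_subset_Icc (a₂ := 0) (b₂ := ((t + 1 : ℕ) : ℤ)) (by omega) (by omega))
      intro z
      show (pl α F z c (t + 1 + 1)).toBlocks₂₂ = _
      rw [hsplit z, mul_Ad_toBlocks₂₂]
      exact (h1.add h2) z
    · -- value of the new QA at 0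
      beta_reduce
      rw [if_pos (by rw [Finset.mem_Icc]; omega), if_neg (by rw [Finset.mem_Icc]; omega),
        add_zero, hA0, hstep11]
    · -- value of the new QD at 0
      beta_reduce
      rw [if_neg (by rw [Finset.mem_Icc]; omega), if_pos (by rw [Finset.mem_Icc]; omega),
        zero_add, hD0, hstep22]
    · -- value of the new QB at c
      beta_reduce
      rw [if_neg (by rw [Finset.mem_Icc]; omega), if_pos (by rw [Finset.mem_Icc]; omega),
        zero_add, hBc, hstep22', mul_assoc]
    · -- value of the new QC at -c
      beta_reduce
      rw [if_pos (by rw [Finset.mem_Icc]; omega), if_neg (by rw [Finset.mem_Icc]; omega),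
        add_zero, hCc, hstep11', mul_assoc]

/-- Frequency supports, constant Fourier coefficients, and the layer-stripping identity
for the NLFT of a sequence supported in `[c, d]`. -/
theorem statement_8 (n : ℕ) (hn : 1 ≤ n) (α : Fin 2 → Fin 2) (c d : ℤ) (hcd : c ≤ d)
    (F : ℤ → Mat n) (hF : ∀ j, Contractive (F j))
    (hsupp : ∀ j : ℤ, j ∉ Finset.Icc c d → F j = 0) :
    (∀ z : Circle, blockA (nlft α F) z =
        ∑ k ∈ Finset.Icc (c - d) 0, (z : ℂ) ^ k • mFourierCoeff (blockA (nlft α F)) k) ∧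
    (∀ z : Circle, blockB (nlft α F) z =
        ∑ k ∈ Finset.Icc c d, (z : ℂ) ^ k • mFourierCoeff (blockB (nlft α F)) k) ∧
    (∀ z : Circle, blockC (nlft α F) z =
        ∑ k ∈ Finset.Icc (-d) (-c), (z : ℂ) ^ k • mFourierCoeff (blockC (nlft α F)) k) ∧
    (∀ z : Circle, blockD (nlft α F) z =
        ∑ k ∈ Finset.Icc 0 (d - c), (z : ℂ) ^ k • mFourierCoeff (blockD (nlft α F)) k) ∧
    mFourierCoeff (blockA (nlft α F)) 0 =
      (((Finset.Icc c d).sort (· ≤ ·)).map fun j => (Yc α (F j)).toBlocks₁₁).prod ∧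
    mFourierCoeff (blockD (nlft α F)) 0 =
      (((Finset.Icc c d).sort (· ≤ ·)).map fun j => (Yc α (F j)).toBlocks₂₂).prod ∧
    Triangular (α 0) (mFourierCoeff (blockA (nlft α F)) 0) ∧
    Triangular (α 1) (mFourierCoeff (blockD (nlft α F)) 0) ∧
    (c = 0 →
      mFourierCoeff (blockB (nlft α F)) 0 * (mFourierCoeff (blockD (nlft α F)) 0)⁻¹ =
        (Yc α (F 0)).toBlocks₁₂ * ((Yc α (F 0)).toBlocks₂₂)⁻¹ ∧
      mFourierCoeff (blockC (nlft α F)) 0 * (mFourierCoeff (blockA (nlft α F)) 0)⁻¹ =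
        (Yc α (F 0)).toBlocks₂₁ * ((Yc α (F 0)).toBlocks₁₁)⁻¹) := by
  set t : ℕ := (d - c).toNat with htdef
  have htt : (d + 1 - c).toNat = t + 1 := by omega
  have hnl : ∀ z : Circle, nlft α F z = pl α F z c (t + 1) := by
    intro z; rw [nlft_eq_pl α F z c d hcd hsupp, htt]
  obtain ⟨QA, QB, QC, QD, hA, hB, hC, hD, hA0, hD0, hBc, hCc⟩ := main_ind α F c t
  have hAr : Rep (blockA (nlft α F)) (Finset.Icc (c - d) 0) QA := by
    rw [show Finset.Icc (c - d) 0 = Finset.Icc (-(t : ℤ)) 0 by congr 1; omega]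
    exact hA.congr fun z => by show (nlft α F z).toBlocks₁₁ = _; rw [hnl z]
  have hBr : Rep (blockB (nlft α F)) (Finset.Icc c d) QB := by
    rw [show Finset.Icc c d = Finset.Icc c (c + (t : ℤ)) by congr 1; omega]
    exact hB.congr fun z => by show (nlft α F z).toBlocks₁₂ = _; rw [hnl z]
  have hCr : Rep (blockC (nlft α F)) (Finset.Icc (-d) (-c)) QC := by
    rw [show Finset.Icc (-d) (-c) = Finset.Icc (-(c + (t : ℤ))) (-c) by congr 1; omega]
    exact hC.congr fun z => by show (nlft α F z).toBlocks₂₁ = _; rw [hnl z]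
  have hDr : Rep (blockD (nlft α F)) (Finset.Icc 0 (d - c)) QD := by
    rw [show Finset.Icc 0 (d - c) = Finset.Icc 0 (t : ℤ) by congr 1; omega]
    exact hD.congr fun z => by show (nlft α F z).toBlocks₂₂ = _; rw [hnl z]
  have expand : ∀ (f : Circle → Mat n) (s : Finset ℤ) (Q : ℤ → Mat n), Rep f s Q →
      ∀ z : Circle, f z = ∑ k ∈ s, (z : ℂ) ^ k • mFourierCoeff f k := by
    intro f s Q h z
    rw [h z]
    refine Finset.sum_congr rfl fun k hk => ?_
    rw [h.coeff k, if_pos hk]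
  have hcA0 : mFourierCoeff (blockA (nlft α F)) 0 = QA 0 := by
    rw [hAr.coeff 0, if_pos (by rw [Finset.mem_Icc]; omega)]
  have hcD0 : mFourierCoeff (blockD (nlft α F)) 0 = QD 0 := by
    rw [hDr.coeff 0, if_pos (by rw [Finset.mem_Icc]; omega)]
  have hsortmap : ∀ (g : ℤ → Mat n), ((Finset.Icc c d).sort (· ≤ ·)).map g
      = (List.range (t + 1)).map (fun i : ℕ => g (c + (i : ℤ))) := by
    intro g
    rw [sort_Icc, htt, List.map_map]
    rfl
  refine ⟨fun z => expand _ _ _ hAr z, fun z => expand _ _ _ hBr z, fun z => expand _ _ _ hCr z,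
    fun z => expand _ _ _ hDr z, ?_, ?_, ?_, ?_, ?_⟩
  · rw [hcA0, hA0, hsortmap]
  · rw [hcD0, hD0, hsortmap]
  · rw [hcA0, hA0]
    refine Triangular.listProd _ fun M hM => ?_
    simp only [List.mem_map] at hM
    obtain ⟨i, _, rfl⟩ := hM
    exact (Yc_triangular α _).1
  · rw [hcD0, hD0]
    refine Triangular.listProd _ fun M hM => ?_
    simp only [List.mem_map] at hM
    obtain ⟨i, _, rfl⟩ := hM
    exact (Yc_triangular α _).2
  · intro hc0
    subst hc0
    have hcB0 : mFourierCoeff (blockB (nlft α F)) 0 = QB 0 := by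
      rw [hBr.coeff 0, if_pos (by rw [Finset.mem_Icc]; omega)]
    have hcC0 : mFourierCoeff (blockC (nlft α F)) 0 = QC 0 := by
      rw [hCr.coeff 0, if_pos (by rw [Finset.mem_Icc]; omega)]
    rw [show (-(0 : ℤ)) = 0 by norm_num] at hCc
    set K : Mat n := ((List.range t).map
      fun i : ℕ => (Yc α (F ((0 : ℤ) + 1 + (i : ℤ)))).toBlocks₂₂).prod with hKdef
    set L : Mat n := ((List.range t).map
      fun i : ℕ => (Yc α (F ((0 : ℤ) + 1 + (i : ℤ)))).toBlocks₁₁).prod with hLdef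
    have hKtri : Triangular (α 1) K := by
      refine Triangular.listProd _ fun M hM => ?_
      simp only [List.mem_map] at hM
      obtain ⟨i, _, rfl⟩ := hM
      exact (Yc_triangular α _).2
    have hLtri : Triangular (α 0) L := by
      refine Triangular.listProd _ fun M hM => ?_
      simp only [List.mem_map] at hM
      obtain ⟨i, _, rfl⟩ := hM
      exact (Yc_triangular α _).1
    have hKK : K * K⁻¹ = 1 := Matrix.mul_nonsing_inv K (Ne.isUnit hKtri.det_ne_zero)
    have hLL : L * L⁻¹ = 1 := Matrix.mul_nonsing_inv L (Ne.isUnit hLtri.det_ne_zero)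
    have hfun22 : ((fun i : ℕ => (Yc α (F ((0 : ℤ) + (i : ℤ)))).toBlocks₂₂) ∘ Nat.succ)
        = fun i : ℕ => (Yc α (F ((0 : ℤ) + 1 + (i : ℤ)))).toBlocks₂₂ := by
      funext i
      simp only [Function.comp_apply]
      have : (0 : ℤ) + ((Nat.succ i : ℕ) : ℤ) = (0 : ℤ) + 1 + (i : ℤ) := by push_cast; ring
      rw [this]
    have hfun11 : ((fun i : ℕ => (Yc α (F ((0 : ℤ) + (i : ℤ)))).toBlocks₁₁) ∘ Nat.succ)
        = fun i : ℕ => (Yc α (F ((0 : ℤ) + 1 + (i : ℤ)))).toBlocks₁₁ := by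
      funext i
      simp only [Function.comp_apply]
      have : (0 : ℤ) + ((Nat.succ i : ℕ) : ℤ) = (0 : ℤ) + 1 + (i : ℤ) := by push_cast; ring
      rw [this]
    have hsplit22 : ((List.range (t + 1)).map
        fun i : ℕ => (Yc α (F ((0 : ℤ) + (i : ℤ)))).toBlocks₂₂).prod
          = (Yc α (F 0)).toBlocks₂₂ * K := by
      rw [List.range_succ_eq_map, List.map_cons, List.prod_cons, List.map_map, hfun22, hKdef]
      norm_num
    have hsplit11 : ((List.range (t + 1)).map
        fun i : ℕ => (Yc α (F ((0 : ℤ) + (i : ℤ)))).toBlocks₁₁).prod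
          = (Yc α (F 0)).toBlocks₁₁ * L := by
      rw [List.range_succ_eq_map, List.map_cons, List.prod_cons, List.map_map, hfun11, hLdef]
      norm_num
    constructor
    · rw [hcB0, hcD0, hBc, hD0, hsplit22, Matrix.mul_inv_rev, mul_assoc,
        ← mul_assoc K, hKK, one_mul]
    · rw [hcC0, hcA0, hCc, hA0, hsplit11, Matrix.mul_inv_rev, mul_assoc,
        ← mul_assoc L, hLL, one_mul]

end NLFT
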